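/- For every N ≥ 1, every K ∈ ℕ, and every pair of starting decks d₁, d₂ (permutations of Fin N), the total variation distance between the K-step distributions of the random-transpositions shuffle satisfies TV(μ_K(d₁), μ_K(d₂)) ≤ N · (1 − 1/N²)^K. -/

import Mathlib

open scoped ENNReal

/-- Total variation distance between two distributions: `(1/2) Σ_x |μ(x) − ν(x)|`. -/
noncomputable def tvDist {X : Type*} (μ ν : PMF X) : ℝ≥0∞ :=
  (1 / 2) * ∑' x, max (μ x - ν x) (ν x - μ x)

/-- One step of the random-transpositions shuffle: sample positions `p` and `p'` independently
and uniformly, and swap the cards at positions `p` and `p'` (if `p = p'` nothing changes). -/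
noncomputable def rtransStep {N : ℕ} (h : 0 < N) (d : Equiv.Perm (Fin N)) :
    PMF (Equiv.Perm (Fin N)) :=
  haveI : Nonempty (Fin N) := ⟨⟨0, h⟩⟩
  (PMF.uniformOfFintype (Fin N)).bind fun p =>
    (PMF.uniformOfFintype (Fin N)).bind fun p' =>
      PMF.pure (d * Equiv.swap p p')

/-- Distribution of the deck after `K` steps of the random-transpositions shuffle from `d`. -/
noncomputable def rtransWalk {N : ℕ} (h : 0 < N) (d : Equiv.Perm (Fin N)) :
    ℕ → PMF (Equiv.Perm (Fin N))
  | 0 => PMF.pure d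
  | (K + 1) => (rtransWalk h d K).bind (rtransStep h)

namespace RTAux

/-! ### Expectation with respect to a `PMF`, valued in `ℝ≥0∞` -/

noncomputable def expect {X : Type*} (μ : PMF X) (f : X → ℝ≥0∞) : ℝ≥0∞ := ∑' x, μ x * f x

lemma expect_pure {X : Type*} (a : X) (f : X → ℝ≥0∞) : expect (PMF.pure a) f = f a := by
  classical
  simp only [expect, PMF.pure_apply]
  rw [tsum_eq_single a (by intro b hb; simp [hb])]
  simp

lemma expect_bind {X Y : Type*} (μ : PMF X) (g : X → PMF Y) (f : Y → ℝ≥0∞) :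
    expect (μ.bind g) f = ∑' a, μ a * expect (g a) f := by
  simp only [expect, PMF.bind_apply]
  have : ∀ b, (∑' a, μ a * (g a) b) * f b = ∑' a, μ a * (g a) b * f b := by
    intro b; rw [ENNReal.tsum_mul_right]
  simp only [this]
  rw [ENNReal.tsum_comm]
  congr 1; funext a
  rw [← ENNReal.tsum_mul_left]
  congr 1; funext b; ring

lemma bind_uniform_equiv {X : Type*} [Fintype X] [Nonempty X] {Y : Type*} (e : X ≃ X)
    (f : X → PMF Y) :
    (PMF.uniformOfFintype X).bind (fun c => f (e c)) = (PMF.uniformOfFintype X).bind f := by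
  ext y
  simp only [PMF.bind_apply, PMF.uniformOfFintype_apply]
  exact e.tsum_eq fun c => (Fintype.card X : ℝ≥0∞)⁻¹ * f c y

/-! ### The coupled chain -/

variable {N : ℕ}

noncomputable def cStep (h : 0 < N) (x : Equiv.Perm (Fin N) × Equiv.Perm (Fin N)) :
    PMF (Equiv.Perm (Fin N) × Equiv.Perm (Fin N)) :=
  haveI : Nonempty (Fin N) := ⟨⟨0, h⟩⟩
  (PMF.uniformOfFintype (Fin N)).bind fun c =>
    (PMF.uniformOfFintype (Fin N)).bind fun p =>
      PMF.pure (x.1 * Equiv.swap (x.1⁻¹ c) p, x.2 * Equiv.swap (x.2⁻¹ c) p)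

noncomputable def cWalk (h : 0 < N) (x : Equiv.Perm (Fin N) × Equiv.Perm (Fin N)) :
    ℕ → PMF (Equiv.Perm (Fin N) × Equiv.Perm (Fin N))
  | 0 => PMF.pure x
  | (K + 1) => (cWalk h x K).bind (cStep h)

lemma map_fst_cStep (h : 0 < N) (x : Equiv.Perm (Fin N) × Equiv.Perm (Fin N)) :
    (cStep h x).map Prod.fst = rtransStep h x.1 := by
  haveI : Nonempty (Fin N) := ⟨⟨0, h⟩⟩
  simp only [cStep, rtransStep, PMF.map_bind, PMF.pure_map]
  exact bind_uniform_equiv (x.1⁻¹ : Equiv.Perm (Fin N))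
    (fun q => (PMF.uniformOfFintype (Fin N)).bind fun p => PMF.pure (x.1 * Equiv.swap q p))

lemma map_snd_cStep (h : 0 < N) (x : Equiv.Perm (Fin N) × Equiv.Perm (Fin N)) :
    (cStep h x).map Prod.snd = rtransStep h x.2 := by
  haveI : Nonempty (Fin N) := ⟨⟨0, h⟩⟩
  simp only [cStep, rtransStep, PMF.map_bind, PMF.pure_map]
  exact bind_uniform_equiv (x.2⁻¹ : Equiv.Perm (Fin N))
    (fun q => (PMF.uniformOfFintype (Fin N)).bind fun p => PMF.pure (x.2 * Equiv.swap q p))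

lemma map_fst_cWalk (h : 0 < N) (x : Equiv.Perm (Fin N) × Equiv.Perm (Fin N)) (K : ℕ) :
    (cWalk h x K).map Prod.fst = rtransWalk h x.1 K := by
  induction K with
  | zero => simp [cWalk, rtransWalk, PMF.pure_map]
  | succ K ih =>
    rw [cWalk, rtransWalk, PMF.map_bind, ← ih, PMF.bind_map]
    congr 1; funext a
    simpa using map_fst_cStep h a

lemma map_snd_cWalk (h : 0 < N) (x : Equiv.Perm (Fin N) × Equiv.Perm (Fin N)) (K : ℕ) :
    (cWalk h x K).map Prod.snd = rtransWalk h x.2 K := by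
  induction K with
  | zero => simp [cWalk, rtransWalk, PMF.pure_map]
  | succ K ih =>
    rw [cWalk, rtransWalk, PMF.map_bind, ← ih, PMF.bind_map]
    congr 1; funext a
    simpa using map_snd_cStep h a

/-! ### The mismatch count and its contraction -/

def mset (a b : Equiv.Perm (Fin N)) : Finset (Fin N) :=
  Finset.univ.filter fun i => a i ≠ b i

lemma mem_mset {a b : Equiv.Perm (Fin N)} {i : Fin N} : i ∈ mset a b ↔ a i ≠ b i := by
  simp [mset]

lemma mset_card_le (a b : Equiv.Perm (Fin N)) : (mset a b).card ≤ N :=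
  le_trans (Finset.card_le_card (Finset.filter_subset _ _)) (by simp)

/-- The number of mismatched cards equals the number of mismatched positions. -/
lemma card_mismatched_cards (a b : Equiv.Perm (Fin N)) :
    (Finset.univ.filter fun c : Fin N => a⁻¹ c ≠ b⁻¹ c).card = (mset a b).card := by
  apply Finset.card_bij (fun c _ => a⁻¹ c)
  · intro c hc
    simp only [Finset.mem_filter, Finset.mem_univ, true_and] at hc
    rw [mem_mset]
    simp only [← Equiv.Perm.mul_apply, mul_inv_cancel, Equiv.Perm.one_apply]
    intro hcon
    apply hc
    have h2 : b⁻¹ c = a⁻¹ c := b.symm_apply_eq.2 hcon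
    exact h2.symm
  · intro c _ c' _ hcc'
    exact (Equiv.injective _) hcc'
  · intro i hi
    rw [mem_mset] at hi
    refine ⟨a i, ?_, by simp⟩
    simp only [Finset.mem_filter, Finset.mem_univ, true_and, ← Equiv.Perm.mul_apply, inv_mul_cancel, Equiv.Perm.one_apply]
    intro hcon
    apply hi
    have : b (b⁻¹ (a i)) = b i := congrArg b hcon.symm
    simpa using this

/-- Key combinatorial step bound, abstract form. -/
lemma card_step_le' (a b : Equiv.Perm (Fin N)) (q r p : Fin N) (hc : a q = b r) :
    (mset (a * Equiv.swap q p) (b * Equiv.swap r p)).card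
      + (if q ≠ r ∧ a p ≠ b p then 1 else 0) ≤ (mset a b).card := by
  classical
  set M := mset a b with hM
  set M' := mset (a * Equiv.swap q p) (b * Equiv.swap r p) with hM'
  have memM' : ∀ i, i ∈ M' ↔ a (Equiv.swap q p i) ≠ b (Equiv.swap r p i) := by
    intro i; rw [hM', mem_mset]; simp
  by_cases hqr : q = r
  · subst hqr
    have himg : M' = M.image (Equiv.swap q p) := by
      ext i
      rw [memM', Finset.mem_image]
      constructor
      · intro hi
        exact ⟨Equiv.swap q p i, mem_mset.2 hi, by simp⟩
      · rintro ⟨j, hj, rfl⟩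
        rw [mem_mset] at hj
        simpa using hj
    rw [himg, Finset.card_image_of_injective _ (Equiv.swap q p).injective]
    simp
  · have hq' : q ∈ M := by
      rw [hM, mem_mset]
      intro hcon
      exact hqr (b.injective (hcon.symm.trans hc))
    have hr' : r ∈ M := by
      rw [hM, mem_mset]
      intro hcon
      exact hqr (a.injective (hc.trans hcon.symm))
    have hpM' : p ∉ M' := by
      rw [memM']
      simp only [Equiv.swap_apply_right, ne_eq, not_not]
      exact hc
    set S : Finset (Fin N) := {p, q, r} with hS
    have hdiff : M' \ S = M \ S := by
      ext i
      simp only [Finset.mem_sdiff, hS, Finset.mem_insert, Finset.mem_singleton, not_or]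
      constructor
      · rintro ⟨hi, hp, hq2, hr2⟩
        rw [memM'] at hi
        rw [Equiv.swap_apply_of_ne_of_ne hq2 hp, Equiv.swap_apply_of_ne_of_ne hr2 hp] at hi
        exact ⟨mem_mset.2 hi, hp, hq2, hr2⟩
      · rintro ⟨hi, hp, hq2, hr2⟩
        rw [hM, mem_mset] at hi
        refine ⟨(memM' i).2 ?_, hp, hq2, hr2⟩
        rw [Equiv.swap_apply_of_ne_of_ne hq2 hp, Equiv.swap_apply_of_ne_of_ne hr2 hp]
        exact hi
    have hcard' : M'.card = (M' \ S).card + (M' ∩ S).card :=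
      (Finset.card_sdiff_add_card_inter M' S).symm
    have hdc : (M' \ S).card = (M \ S).card := by rw [hdiff]
    have hcard : M.card = (M \ S).card + (M ∩ S).card :=
      (Finset.card_sdiff_add_card_inter M S).symm
    have hqr2 : ({q, r} : Finset (Fin N)) ⊆ M ∩ S := by
      intro i hi
      simp only [Finset.mem_insert, Finset.mem_singleton] at hi
      rw [Finset.mem_inter, hS]
      rcases hi with rfl | rfl
      · exact ⟨hq', by simp⟩
      · exact ⟨hr', by simp⟩
    have hqr2c := Finset.card_le_card hqr2
    rw [Finset.card_pair hqr] at hqr2c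
    have hif : (if q ≠ r ∧ a p ≠ b p then 1 else 0) ≤ 1 := by split <;> simp
    have key : (M' ∩ S).card + (if q ≠ r ∧ a p ≠ b p then 1 else 0) ≤ (M ∩ S).card := by
      by_cases hpq : p = q
      · have h1 : M' ∩ S ⊆ {r} := by
          intro i hi
          rw [Finset.mem_inter] at hi
          obtain ⟨hi1, hi2⟩ := hi
          rw [hS] at hi2
          simp only [Finset.mem_insert, Finset.mem_singleton] at hi2 ⊢
          rcases hi2 with h | h | h
          · exact absurd (h ▸ hi1) hpM'
          · exact absurd ((hpq ▸ h) ▸ hi1) hpM'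
          · exact h
        have h1c := Finset.card_le_card h1
        simp only [Finset.card_singleton] at h1c
        omega
      · by_cases hpr : p = r
        · have h1 : M' ∩ S ⊆ {q} := by
            intro i hi
            rw [Finset.mem_inter] at hi
            obtain ⟨hi1, hi2⟩ := hi
            rw [hS] at hi2
            simp only [Finset.mem_insert, Finset.mem_singleton] at hi2 ⊢
            rcases hi2 with h | h | h
            · exact absurd (h ▸ hi1) hpM'
            · exact h
            · exact absurd ((hpr ▸ h) ▸ hi1) hpM'
          have h1c := Finset.card_le_card h1
          simp only [Finset.card_singleton] at h1c
          omega
        · have h1 : M' ∩ S ⊆ {q, r} := by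
            intro i hi
            rw [Finset.mem_inter] at hi
            obtain ⟨hi1, hi2⟩ := hi
            rw [hS] at hi2
            simp only [Finset.mem_insert, Finset.mem_singleton] at hi2 ⊢
            rcases hi2 with h | h | h
            · exact absurd (h ▸ hi1) hpM'
            · exact Or.inl h
            · exact Or.inr h
          have h1c := Finset.card_le_card h1
          rw [Finset.card_pair hqr] at h1c
          by_cases hpm : a p ≠ b p
          · have h2 : ({p, q, r} : Finset (Fin N)) ⊆ M ∩ S := by
              intro i hi
              simp only [Finset.mem_insert, Finset.mem_singleton] at hi
              rw [Finset.mem_inter, hS]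
              rcases hi with rfl | rfl | rfl
              · exact ⟨mem_mset.2 hpm, by simp⟩
              · exact ⟨hq', by simp⟩
              · exact ⟨hr', by simp⟩
            have h3 : ({p, q, r} : Finset (Fin N)).card = 3 := by
              rw [Finset.card_insert_of_notMem (by simp [hpq, hpr]), Finset.card_pair hqr]
            have h2c := Finset.card_le_card h2
            rw [h3] at h2c
            omega
          · have hif0 : (if q ≠ r ∧ a p ≠ b p then 1 else 0) = 0 := by
              rw [if_neg]; tauto
            omega
    omega

lemma card_step_le (a b : Equiv.Perm (Fin N)) (c p : Fin N) :
    (mset (a * Equiv.swap (a⁻¹ c) p) (b * Equiv.swap (b⁻¹ c) p)).card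
      + (if a⁻¹ c ≠ b⁻¹ c ∧ a p ≠ b p then 1 else 0) ≤ (mset a b).card :=
  card_step_le' a b (a⁻¹ c) (b⁻¹ c) p (by simp)

/-- Summed combinatorial bound. -/
lemma sum_card_le (a b : Equiv.Perm (Fin N)) :
    (∑ c : Fin N, ∑ p : Fin N,
        (mset (a * Equiv.swap (a⁻¹ c) p) (b * Equiv.swap (b⁻¹ c) p)).card)
      ≤ (N ^ 2 - 1) * (mset a b).card := by
  classical
  set D := (mset a b).card with hD
  have hsum : (∑ c : Fin N, ∑ p : Fin N,
      ((mset (a * Equiv.swap (a⁻¹ c) p) (b * Equiv.swap (b⁻¹ c) p)).card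
        + (if a⁻¹ c ≠ b⁻¹ c ∧ a p ≠ b p then 1 else 0))) ≤ N ^ 2 * D := by
    calc (∑ c : Fin N, ∑ p : Fin N, _) ≤ ∑ _c : Fin N, ∑ _p : Fin N, D := by
          apply Finset.sum_le_sum; intro c _
          apply Finset.sum_le_sum; intro p _
          exact card_step_le a b c p
      _ = N ^ 2 * D := by simp [Finset.sum_const, mul_comm, mul_assoc, sq]
  have hind : (∑ c : Fin N, ∑ p : Fin N,
      (if a⁻¹ c ≠ b⁻¹ c ∧ a p ≠ b p then 1 else 0)) = D * D := by
    have : ∀ c p : Fin N, (if a⁻¹ c ≠ b⁻¹ c ∧ a p ≠ b p then 1 else 0)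
        = (if a⁻¹ c ≠ b⁻¹ c then 1 else 0) * (if a p ≠ b p then 1 else 0) := by
      intro c p
      by_cases h1 : a⁻¹ c ≠ b⁻¹ c <;> by_cases h2 : a p ≠ b p <;> simp [h1, h2]
    simp only [this]
    rw [← Finset.sum_mul_sum]
    rw [Finset.sum_boole, Finset.sum_boole]
    rw [hD]
    norm_cast
    rw [card_mismatched_cards a b]
    rfl
  have h1 : (∑ c : Fin N, ∑ p : Fin N,
      (mset (a * Equiv.swap (a⁻¹ c) p) (b * Equiv.swap (b⁻¹ c) p)).card) + D * D
      ≤ N ^ 2 * D := by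
    rw [← hind, ← Finset.sum_add_distrib]
    calc (∑ c : Fin N, ((∑ p : Fin N,
          (mset (a * Equiv.swap (a⁻¹ c) p) (b * Equiv.swap (b⁻¹ c) p)).card)
          + ∑ p : Fin N, (if a⁻¹ c ≠ b⁻¹ c ∧ a p ≠ b p then 1 else 0)))
        = ∑ c : Fin N, ∑ p : Fin N,
          ((mset (a * Equiv.swap (a⁻¹ c) p) (b * Equiv.swap (b⁻¹ c) p)).card
            + (if a⁻¹ c ≠ b⁻¹ c ∧ a p ≠ b p then 1 else 0)) := by
          congr 1; funext c; rw [← Finset.sum_add_distrib]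
      _ ≤ N ^ 2 * D := hsum
  have hDD : D ≤ D * D := by nlinarith
  calc (∑ c : Fin N, ∑ p : Fin N,
        (mset (a * Equiv.swap (a⁻¹ c) p) (b * Equiv.swap (b⁻¹ c) p)).card)
      ≤ N ^ 2 * D - D * D := Nat.le_sub_of_add_le h1
    _ ≤ N ^ 2 * D - D := Nat.sub_le_sub_left hDD _
    _ = (N ^ 2 - 1) * D := (Nat.sub_one_mul _ _).symm

/-! ### The contraction in expectation -/

noncomputable def ratio (N : ℕ) : ℝ≥0∞ := ((N ^ 2 - 1 : ℕ) : ℝ≥0∞) / ((N ^ 2 : ℕ) : ℝ≥0∞)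

lemma expect_cStep_le (h : 0 < N) (x : Equiv.Perm (Fin N) × Equiv.Perm (Fin N)) :
    expect (cStep h x) (fun y => ((mset y.1 y.2).card : ℝ≥0∞))
      ≤ ratio N * ((mset x.1 x.2).card : ℝ≥0∞) := by
  haveI : Nonempty (Fin N) := ⟨⟨0, h⟩⟩
  have hNne : (N : ℝ≥0∞) ≠ 0 := by
    simp only [ne_eq, Nat.cast_eq_zero]
    omega
  have hNnt : (N : ℝ≥0∞) ≠ ⊤ := ENNReal.natCast_ne_top N
  rw [cStep, expect_bind]
  simp only [expect_bind, expect_pure, PMF.uniformOfFintype_apply, Fintype.card_fin]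
  rw [tsum_fintype]
  have inner : ∀ c : Fin N, (∑' p : Fin N, ((N : ℝ≥0∞))⁻¹ *
      ((mset (x.1 * Equiv.swap (x.1⁻¹ c) p) (x.2 * Equiv.swap (x.2⁻¹ c) p)).card : ℝ≥0∞))
      = (N : ℝ≥0∞)⁻¹ * ∑ p : Fin N,
        ((mset (x.1 * Equiv.swap (x.1⁻¹ c) p) (x.2 * Equiv.swap (x.2⁻¹ c) p)).card : ℝ≥0∞) := by
    intro c
    rw [tsum_fintype, Finset.mul_sum]
  calc (∑ c : Fin N, (N : ℝ≥0∞)⁻¹ * ∑' p : Fin N, (N : ℝ≥0∞)⁻¹ *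
        ((mset (x.1 * Equiv.swap (x.1⁻¹ c) p) (x.2 * Equiv.swap (x.2⁻¹ c) p)).card : ℝ≥0∞))
      = (N : ℝ≥0∞)⁻¹ * (N : ℝ≥0∞)⁻¹ * ∑ c : Fin N, ∑ p : Fin N,
        ((mset (x.1 * Equiv.swap (x.1⁻¹ c) p) (x.2 * Equiv.swap (x.2⁻¹ c) p)).card : ℝ≥0∞) := by
        simp only [inner]
        rw [Finset.mul_sum]
        congr 1; funext c; ring
    _ ≤ (N : ℝ≥0∞)⁻¹ * (N : ℝ≥0∞)⁻¹ * (((N ^ 2 - 1) * (mset x.1 x.2).card : ℕ) : ℝ≥0∞) := by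
        gcongr
        have := sum_card_le (N := N) x.1 x.2
        calc (∑ c : Fin N, ∑ p : Fin N,
            ((mset (x.1 * Equiv.swap (x.1⁻¹ c) p) (x.2 * Equiv.swap (x.2⁻¹ c) p)).card : ℝ≥0∞))
            = (((∑ c : Fin N, ∑ p : Fin N,
              (mset (x.1 * Equiv.swap (x.1⁻¹ c) p) (x.2 * Equiv.swap (x.2⁻¹ c) p)).card) : ℕ) : ℝ≥0∞) := by
              push_cast; rfl
          _ ≤ _ := by exact_mod_cast Nat.cast_le.mpr this
    _ = ratio N * ((mset x.1 x.2).card : ℝ≥0∞) := by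
        rw [ratio]
        push_cast
        rw [ENNReal.div_eq_inv_mul]
        have : (((N : ℝ≥0∞)) ^ 2)⁻¹ = (N : ℝ≥0∞)⁻¹ * (N : ℝ≥0∞)⁻¹ := by
          rw [sq, ENNReal.mul_inv (Or.inl hNne) (Or.inr hNne)]
        rw [this]
        ring

lemma expect_cWalk_le (h : 0 < N) (x : Equiv.Perm (Fin N) × Equiv.Perm (Fin N)) (K : ℕ) :
    expect (cWalk h x K) (fun y => ((mset y.1 y.2).card : ℝ≥0∞))
      ≤ (N : ℝ≥0∞) * ratio N ^ K := by
  induction K with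
  | zero =>
    rw [cWalk, expect_pure, pow_zero, mul_one]
    exact_mod_cast Nat.cast_le.mpr (mset_card_le x.1 x.2)
  | succ K ih =>
    rw [cWalk, expect_bind]
    calc (∑' y, (cWalk h x K) y * expect (cStep h y) (fun y => ((mset y.1 y.2).card : ℝ≥0∞)))
        ≤ ∑' y, (cWalk h x K) y * (ratio N * ((mset y.1 y.2).card : ℝ≥0∞)) :=
          ENNReal.tsum_le_tsum fun y => mul_le_mul_right (expect_cStep_le h y) _
      _ = ratio N * expect (cWalk h x K) (fun y => ((mset y.1 y.2).card : ℝ≥0∞)) := by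
          rw [expect, ← ENNReal.tsum_mul_left]
          congr 1; funext y; ring
      _ ≤ ratio N * ((N : ℝ≥0∞) * ratio N ^ K) := mul_le_mul_right ih _
      _ = (N : ℝ≥0∞) * ratio N ^ (K + 1) := by ring

/-! ### The TV coupling bound -/

lemma tv_le_expect {X : Type*} [Fintype X] [DecidableEq X] (π : PMF (X × X)) :
    tvDist (π.map Prod.fst) (π.map Prod.snd)
      ≤ expect π (fun y => if y.1 = y.2 then 0 else 1) := by
  classical
  set m : X → ℝ≥0∞ := fun x => ∑ z : X × X, if z.1 = x ∧ z.1 ≠ z.2 then π z else 0 with hm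
  set n : X → ℝ≥0∞ := fun x => ∑ z : X × X, if z.2 = x ∧ z.1 ≠ z.2 then π z else 0 with hn
  have hμ : ∀ x, (π.map Prod.fst) x ≤ (π.map Prod.snd) x + m x := by
    intro x
    rw [PMF.map_apply, PMF.map_apply, tsum_fintype, tsum_fintype, hm, ← Finset.sum_add_distrib]
    apply Finset.sum_le_sum
    rintro ⟨z1, z2⟩ _
    simp only
    by_cases h1 : x = z1
    · subst h1
      by_cases h2 : x = z2
      · subst h2; simp
      · have hne : x ≠ z2 := h2
        simp [hne, Ne.symm hne]
    · simp [h1]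
  have hν : ∀ x, (π.map Prod.snd) x ≤ (π.map Prod.fst) x + n x := by
    intro x
    rw [PMF.map_apply, PMF.map_apply, tsum_fintype, tsum_fintype, hn, ← Finset.sum_add_distrib]
    apply Finset.sum_le_sum
    rintro ⟨z1, z2⟩ _
    simp only
    by_cases h1 : x = z2
    · subst h1
      by_cases h2 : z1 = x
      · subst h2; simp
      · simp [h2]
    · simp [h1]
  have hptw : ∀ x, max ((π.map Prod.fst) x - (π.map Prod.snd) x)
      ((π.map Prod.snd) x - (π.map Prod.fst) x) ≤ m x + n x := by
    intro x
    apply max_le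
    · exact le_trans (tsub_le_iff_right.mpr (by rw [add_comm]; exact hμ x)) le_self_add
    · exact le_trans (tsub_le_iff_right.mpr (by rw [add_comm]; exact hν x)) le_add_self
  have inner_m : ∀ z : X × X, (∑ x : X, if z.1 = x ∧ z.1 ≠ z.2 then π z else 0)
      = if z.1 ≠ z.2 then π z else 0 := by
    intro z
    rw [Finset.sum_eq_single z.1]
    · simp
    · intro x _ hx
      rw [if_neg]
      rintro ⟨h, -⟩
      exact hx h.symm
    · intro h; exact absurd (Finset.mem_univ _) h
  have inner_n : ∀ z : X × X, (∑ x : X, if z.2 = x ∧ z.1 ≠ z.2 then π z else 0)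
      = if z.1 ≠ z.2 then π z else 0 := by
    intro z
    rw [Finset.sum_eq_single z.2]
    · simp
    · intro x _ hx
      rw [if_neg]
      rintro ⟨h, -⟩
      exact hx h.symm
    · intro h; exact absurd (Finset.mem_univ _) h
  have hE : expect π (fun y => if y.1 = y.2 then 0 else 1)
      = ∑ z : X × X, if z.1 ≠ z.2 then π z else 0 := by
    rw [expect, tsum_fintype]
    apply Finset.sum_congr rfl
    intro z _
    by_cases h : z.1 = z.2 <;> simp [h]
  have hmsum : ∑ x : X, m x = ∑ z : X × X, if z.1 ≠ z.2 then π z else 0 := by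
    rw [hm, Finset.sum_comm]
    exact Finset.sum_congr rfl fun z _ => inner_m z
  have hnsum : ∑ x : X, n x = ∑ z : X × X, if z.1 ≠ z.2 then π z else 0 := by
    rw [hn, Finset.sum_comm]
    exact Finset.sum_congr rfl fun z _ => inner_n z
  rw [tvDist, hE]
  calc (1 / 2 : ℝ≥0∞) * ∑' x, max ((π.map Prod.fst) x - (π.map Prod.snd) x)
        ((π.map Prod.snd) x - (π.map Prod.fst) x)
      ≤ (1 / 2) * ∑ x : X, (m x + n x) := by
        gcongr
        rw [tsum_fintype]
        exact Finset.sum_le_sum fun x _ => hptw x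
    _ = (1 / 2) * (2 * ∑ z : X × X, if z.1 ≠ z.2 then π z else 0) := by
        rw [Finset.sum_add_distrib, hmsum, hnsum, two_mul]
    _ = ∑ z : X × X, if z.1 ≠ z.2 then π z else 0 := by
        rw [← mul_assoc, one_div, ENNReal.inv_mul_cancel two_ne_zero ENNReal.ofNat_ne_top, one_mul]

lemma ratio_eq (h : 0 < N) : ratio N = 1 - 1 / (N : ℝ≥0∞) ^ 2 := by
  have h2 : (1 : ℕ) ≤ N ^ 2 := by nlinarith
  have hne : ((N : ℝ≥0∞)) ^ 2 ≠ 0 := by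
    apply pow_ne_zero
    simp only [ne_eq, Nat.cast_eq_zero]
    omega
  have hnt : ((N : ℝ≥0∞)) ^ 2 ≠ ⊤ := ENNReal.pow_ne_top (ENNReal.natCast_ne_top N)
  rw [ratio, ENNReal.natCast_sub]
  push_cast
  rw [ENNReal.sub_div (fun _ _ => hne), ENNReal.div_self hne hnt]

end RTAux

/-- **Rapid mixing of the random-transpositions shuffle (upper bound).** For any `N ≥ 1`, `K`,
and starting decks `d₁, d₂`, the TV distance between the `K`-step distributions is at most
`N · (1 − 1/N²)^K`. -/
theorem rtransWalk_tv_le (N K : ℕ) (hN : 0 < N) (d₁ d₂ : Equiv.Perm (Fin N)) :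
    tvDist (rtransWalk hN d₁ K) (rtransWalk hN d₂ K)
      ≤ (N : ℝ≥0∞) * (1 - 1 / (N : ℝ≥0∞) ^ 2) ^ K := by
  classical
  set π := RTAux.cWalk hN (d₁, d₂) K with hπ
  have h1 : rtransWalk hN d₁ K = π.map Prod.fst := (RTAux.map_fst_cWalk hN (d₁, d₂) K).symm
  have h2 : rtransWalk hN d₂ K = π.map Prod.snd := (RTAux.map_snd_cWalk hN (d₁, d₂) K).symm
  rw [h1, h2, ← RTAux.ratio_eq hN]
  calc tvDist (π.map Prod.fst) (π.map Prod.snd)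
      ≤ RTAux.expect π (fun y => if y.1 = y.2 then 0 else 1) := RTAux.tv_le_expect π
    _ ≤ RTAux.expect π (fun y => ((RTAux.mset y.1 y.2).card : ℝ≥0∞)) := by
        apply ENNReal.tsum_le_tsum
        intro y
        apply mul_le_mul_right
        by_cases h : y.1 = y.2
        · simp [h]
        · simp only [if_neg h]
          have : ∃ i, y.1 i ≠ y.2 i := by
            by_contra hcon
            push_neg at hcon
            exact h (Equiv.ext hcon)
          obtain ⟨i, hi⟩ := this
          have hpos : 0 < (RTAux.mset y.1 y.2).card :=
            Finset.card_pos.mpr ⟨i, RTAux.mem_mset.2 hi⟩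
          exact_mod_cast Nat.one_le_cast.mpr hpos
    _ ≤ (N : ℝ≥0∞) * RTAux.ratio N ^ K := RTAux.expect_cWalk_le hN (d₁, d₂) K
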